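/- Let Φ_t(v) := H Ψ_t(v), fix k ∈ ℕ and u ∈ B_R, and suppose there is c > 0 such that max_{0≤i≤k} ‖Φ_{t_i}(u) − Φ_{t_i}(v)‖ ≥ c·‖v − u‖ for every v ∈ B_R. Let Z_0, …, Z_k be random vectors in ℝ^{d_o} with E‖Z_i‖² ≤ σ_Z² < ∞ for each i, and Y_i := Φ_{t_i}(u) + Z_i. Then any random variable U taking values in B_R that satisfies max_{0≤i≤k} ‖Φ_{t_i}(U) − Y_i‖ ≤ max_{0≤i≤k} ‖Φ_{t_i}(u) − Y_i‖ almost surely (in particular, any minimizer over B_R of v ↦ max_{0≤i≤k} ‖Φ_{t_i}(v) − Y_i‖) satisfies E‖U − u‖² ≤ (4(k+1)/c²)·σ_Z², and moreover E‖Ψ_{t_k}(U) − Ψ_{t_k}(u)‖² ≤ (4(k+1)/c²)·exp(2G·t_k)·σ_Z², where G := ‖A‖ + 2‖B‖R. -/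

import Mathlib

open MeasureTheory Set
open scoped ENNReal

noncomputable section

lemma flow_exp_bound {d : ℕ}
    (A : EuclideanSpace ℝ (Fin d) →L[ℝ] EuclideanSpace ℝ (Fin d))
    (B : EuclideanSpace ℝ (Fin d) →L[ℝ] EuclideanSpace ℝ (Fin d) →L[ℝ] EuclideanSpace ℝ (Fin d))
    (f : EuclideanSpace ℝ (Fin d)) (R : ℝ)
    (Ψ : ℝ → EuclideanSpace ℝ (Fin d) → EuclideanSpace ℝ (Fin d))
    (hΨ0 : ∀ x, ‖x‖ ≤ R → Ψ 0 x = x)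
    (hΨR : ∀ x, ‖x‖ ≤ R → ∀ t : ℝ, 0 ≤ t → ‖Ψ t x‖ ≤ R)
    (hΨode : ∀ x, ‖x‖ ≤ R → ∀ t : ℝ, 0 ≤ t →
      HasDerivWithinAt (fun s => Ψ s x)
        (f - A (Ψ t x) - B (Ψ t x) (Ψ t x)) (Ici 0) t)
    (v w : EuclideanSpace ℝ (Fin d)) (hv : ‖v‖ ≤ R) (hw : ‖w‖ ≤ R)
    (t : ℝ) (ht : 0 ≤ t) :
    ‖Ψ t v - Ψ t w‖ ≤ Real.exp ((‖A‖ + 2 * ‖B‖ * R) * t) * ‖v - w‖ := by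
  have main := norm_le_gronwallBound_of_norm_deriv_right_le
    (f := fun s => Ψ s v - Ψ s w)
    (f' := fun s => (f - A (Ψ s v) - B (Ψ s v) (Ψ s v)) -
      (f - A (Ψ s w) - B (Ψ s w) (Ψ s w)))
    (δ := ‖v - w‖) (K := ‖A‖ + 2 * ‖B‖ * R) (ε := 0) (a := 0) (b := t)
    (fun s hs => (((hΨode v hv s hs.1).sub (hΨode w hw s hs.1)).continuousWithinAt).mono
      Icc_subset_Ici_self)
    (fun s hs => ((hΨode v hv s hs.1).sub (hΨode w hw s hs.1)).mono
      (Ici_subset_Ici.mpr hs.1))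
    (by simp [hΨ0 v hv, hΨ0 w hw])
    ?_ t ⟨ht, le_refl t⟩
  · rw [gronwallBound_ε0, sub_zero] at main
    calc ‖Ψ t v - Ψ t w‖ = ‖(fun s => Ψ s v - Ψ s w) t‖ := rfl
      _ ≤ ‖v - w‖ * Real.exp ((‖A‖ + 2 * ‖B‖ * R) * t) := main
      _ = Real.exp ((‖A‖ + 2 * ‖B‖ * R) * t) * ‖v - w‖ := mul_comm _ _
  · intro s hs
    have hx : ‖Ψ s v‖ ≤ R := hΨR v hv s hs.1
    have hy : ‖Ψ s w‖ ≤ R := hΨR w hw s hs.1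
    set x := Ψ s v with hxdef
    set y := Ψ s w with hydef
    have heq : (f - A x - B x x) - (f - A y - B y y)
        = -(A (x - y)) - B (x - y) x - B y (x - y) := by
      simp only [map_sub, ContinuousLinearMap.sub_apply]
      abel
    show ‖(f - A x - B x x) - (f - A y - B y y)‖ ≤
      (‖A‖ + 2 * ‖B‖ * R) * ‖x - y‖ + 0
    rw [heq]
    have h1 : ‖-(A (x - y)) - B (x - y) x - B y (x - y)‖ ≤
        ‖A (x - y)‖ + ‖B (x - y) x‖ + ‖B y (x - y)‖ := by
      calc ‖-(A (x - y)) - B (x - y) x - B y (x - y)‖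
          ≤ ‖-(A (x - y)) - B (x - y) x‖ + ‖B y (x - y)‖ := norm_sub_le _ _
        _ ≤ ‖-(A (x - y))‖ + ‖B (x - y) x‖ + ‖B y (x - y)‖ := by
            gcongr; exact norm_sub_le _ _
        _ = ‖A (x - y)‖ + ‖B (x - y) x‖ + ‖B y (x - y)‖ := by rw [norm_neg]
    have h2 : ‖A (x - y)‖ ≤ ‖A‖ * ‖x - y‖ := A.le_opNorm _
    have h3 : ‖B (x - y) x‖ ≤ ‖B‖ * ‖x - y‖ * ‖x‖ := B.le_opNorm₂ _ _
    have h4 : ‖B y (x - y)‖ ≤ ‖B‖ * ‖y‖ * ‖x - y‖ := B.le_opNorm₂ _ _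
    have hB : (0:ℝ) ≤ ‖B‖ := B.opNorm_nonneg
    have hg : (0:ℝ) ≤ ‖x - y‖ := norm_nonneg _
    have : ‖(fun s => Ψ s v - Ψ s w) s‖ = ‖x - y‖ := rfl
    rw [this]
    nlinarith [mul_le_mul_of_nonneg_left hx (mul_nonneg hB hg),
      mul_le_mul_of_nonneg_right (mul_le_mul_of_nonneg_left hy hB) hg]

lemma lintegral_sq_le_of_ae_le_sum {dO : ℕ} {Ω : Type*} [MeasurableSpace Ω]
    (μ : MeasureTheory.Measure Ω)
    (Z : ℕ → Ω → EuclideanSpace ℝ (Fin dO)) (hZmeas : ∀ i, Measurable (Z i))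
    (σZ : ℝ) (k : ℕ)
    (hZmom : ∀ i ≤ k, ∫⁻ ω, ENNReal.ofReal (‖Z i ω‖ ^ 2) ∂μ ≤ ENNReal.ofReal (σZ ^ 2))
    (g : Ω → ℝ) (C : ℝ) (hC : 0 ≤ C)
    (hg : ∀ᵐ ω ∂μ, g ω ≤ C * ∑ j ∈ Finset.range (k + 1), ‖Z j ω‖ ^ 2) :
    ∫⁻ ω, ENNReal.ofReal (g ω) ∂μ ≤ ENNReal.ofReal (C * (k + 1) * σZ ^ 2) := by
  have hmeas : ∀ j ∈ Finset.range (k + 1),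
      Measurable (fun ω => ENNReal.ofReal (‖Z j ω‖ ^ 2)) := by
    intro j _
    exact (((hZmeas j).norm).pow_const 2).ennreal_ofReal
  calc ∫⁻ ω, ENNReal.ofReal (g ω) ∂μ
      ≤ ∫⁻ ω, ENNReal.ofReal (C * ∑ j ∈ Finset.range (k + 1), ‖Z j ω‖ ^ 2) ∂μ :=
        MeasureTheory.lintegral_mono_ae (hg.mono fun ω hω => ENNReal.ofReal_le_ofReal hω)
    _ = ∫⁻ ω, ENNReal.ofReal C *
          ∑ j ∈ Finset.range (k + 1), ENNReal.ofReal (‖Z j ω‖ ^ 2) ∂μ := by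
        congr 1; ext ω
        rw [ENNReal.ofReal_mul hC, ENNReal.ofReal_sum_of_nonneg]
        intro i _; positivity
    _ = ENNReal.ofReal C *
          ∑ j ∈ Finset.range (k + 1), ∫⁻ ω, ENNReal.ofReal (‖Z j ω‖ ^ 2) ∂μ := by
        rw [MeasureTheory.lintegral_const_mul _ (Finset.measurable_sum _ hmeas),
          MeasureTheory.lintegral_finset_sum _ hmeas]
    _ ≤ ENNReal.ofReal C *
          ∑ _j ∈ Finset.range (k + 1), ENNReal.ofReal (σZ ^ 2) := by
        gcongr with j hj
        exact hZmom j (Nat.lt_succ_iff.mp (Finset.mem_range.mp hj))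
    _ = ENNReal.ofReal (C * (k + 1) * σZ ^ 2) := by
        rw [Finset.sum_const, Finset.card_range, nsmul_eq_mul]
        rw [show (C * (k + 1) * σZ ^ 2) = C * ((k+1 : ℝ) * σZ ^ 2) by ring,
          ENNReal.ofReal_mul hC, ENNReal.ofReal_mul (by positivity),
          show ((k+1:ℝ)) = ((k+1 : ℕ) : ℝ) by push_cast; ring,
          ENNReal.ofReal_natCast]

/-- upper bound for unbounded observation errors.  Under
Assumption 7, any (measurable selection of a) minimizer `U` over `B_R` of
`v ↦ max_{0≤i≤k} ‖Φ_{t_i}(v) - Y_i‖` satisfies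
`E‖U - u‖² ≤ (4(k+1)/c²)·σ_Z²` and
`E‖Ψ_{t_k}(U) - Ψ_{t_k}(u)‖² ≤ (4(k+1)/c²)·exp(2 G t_k)·σ_Z²`. -/
theorem mse_upper_bound_unbounded_noise {d dO : ℕ}
    (A : EuclideanSpace ℝ (Fin d) →L[ℝ] EuclideanSpace ℝ (Fin d))
    (B : EuclideanSpace ℝ (Fin d) →L[ℝ] EuclideanSpace ℝ (Fin d) →L[ℝ] EuclideanSpace ℝ (Fin d))
    (f : EuclideanSpace ℝ (Fin d))
    (R δ : ℝ) (hR : 0 < R) (hδ : 0 < δ)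
    (htrap : ∀ x : EuclideanSpace ℝ (Fin d),
      ‖x‖ ∈ Icc R (R + δ) → (inner ℝ (f - A x - B x x) x : ℝ) ≤ 0)
    (Ψ : ℝ → EuclideanSpace ℝ (Fin d) → EuclideanSpace ℝ (Fin d))
    (hΨ0 : ∀ x, ‖x‖ ≤ R → Ψ 0 x = x)
    (hΨR : ∀ x, ‖x‖ ≤ R → ∀ t : ℝ, 0 ≤ t → ‖Ψ t x‖ ≤ R)
    (hΨode : ∀ x, ‖x‖ ≤ R → ∀ t : ℝ, 0 ≤ t →
      HasDerivWithinAt (fun s => Ψ s x)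
        (f - A (Ψ t x) - B (Ψ t x) (Ψ t x)) (Ici 0) t)
    (h : ℝ) (hh : 0 < h)
    (H : EuclideanSpace ℝ (Fin d) →L[ℝ] EuclideanSpace ℝ (Fin dO))
    (k : ℕ) (u : EuclideanSpace ℝ (Fin d)) (hu : ‖u‖ ≤ R)
    -- Assumption 7:
    (c : ℝ) (hc : 0 < c)
    (hass : ∀ v : EuclideanSpace ℝ (Fin d), ‖v‖ ≤ R →
      ∃ i ≤ k, c * ‖v - u‖ ≤ ‖H (Ψ (i * h) u) - H (Ψ (i * h) v)‖)
    -- noise with finite second moment, and the observations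
    (Ω : Type*) [MeasurableSpace Ω] (μ : Measure Ω) [IsProbabilityMeasure μ]
    (Z : ℕ → Ω → EuclideanSpace ℝ (Fin dO)) (hZmeas : ∀ i, Measurable (Z i))
    (σZ : ℝ) (hσZ : 0 ≤ σZ)
    (hZmom : ∀ i ≤ k, ∫⁻ ω, ENNReal.ofReal (‖Z i ω‖ ^ 2) ∂μ ≤ ENNReal.ofReal (σZ ^ 2))
    (Y : ℕ → Ω → EuclideanSpace ℝ (Fin dO))
    (hY : ∀ i ≤ k, ∀ ω, Y i ω = H (Ψ (i * h) u) + Z i ω)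
    -- a (near-)minimizer of the max observation error over `B_R`
    (U : Ω → EuclideanSpace ℝ (Fin d)) (hUR : ∀ ω, ‖U ω‖ ≤ R)
    (hUmin : ∀ᵐ ω ∂μ, ∀ i ≤ k,
      ‖H (Ψ (i * h) (U ω)) - Y i ω‖ ≤
        (Finset.range (k + 1)).sup' ⟨0, Finset.mem_range.mpr (Nat.succ_pos k)⟩
          (fun j => ‖H (Ψ (j * h) u) - Y j ω‖)) :
    (∫⁻ ω, ENNReal.ofReal (‖U ω - u‖ ^ 2) ∂μ ≤
      ENNReal.ofReal (4 * (k + 1) / c ^ 2 * σZ ^ 2)) ∧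
    (∫⁻ ω, ENNReal.ofReal (‖Ψ (k * h) (U ω) - Ψ (k * h) u‖ ^ 2) ∂μ ≤
      ENNReal.ofReal (4 * (k + 1) / c ^ 2 *
        Real.exp (2 * (‖A‖ + 2 * ‖B‖ * R) * (k * h)) * σZ ^ 2)) := by
  have hne : (Finset.range (k + 1)).Nonempty := ⟨0, Finset.mem_range.mpr (Nat.succ_pos k)⟩
  -- each observation error at the truth equals the noise norm
  have hobs : ∀ j ≤ k, ∀ ω, ‖H (Ψ (j * h) u) - Y j ω‖ = ‖Z j ω‖ := by
    intro j hj ω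
    rw [hY j hj ω]
    have : H (Ψ (j * h) u) - (H (Ψ (j * h) u) + Z j ω) = -(Z j ω) := by abel
    rw [this, norm_neg]
  -- pointwise key estimate
  have key : ∀ᵐ ω ∂μ, ‖U ω - u‖ ^ 2 ≤
      4 / c ^ 2 * ∑ j ∈ Finset.range (k + 1), ‖Z j ω‖ ^ 2 := by
    filter_upwards [hUmin] with ω hω
    obtain ⟨i, hik, hi⟩ := hass (U ω) (hUR ω)
    set M := (Finset.range (k + 1)).sup' hne (fun j => ‖H (Ψ (j * h) u) - Y j ω‖) with hMdef
    obtain ⟨j0, hj0mem, hj0⟩ := Finset.exists_mem_eq_sup' hne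
      (fun j => ‖H (Ψ (j * h) u) - Y j ω‖)
    have hj0k : j0 ≤ k := Nat.lt_succ_iff.mp (Finset.mem_range.mp hj0mem)
    have hM : M = ‖Z j0 ω‖ := by rw [hMdef, hj0]; exact hobs j0 hj0k ω
    have htri : ‖H (Ψ (i * h) u) - H (Ψ (i * h) (U ω))‖ ≤
        ‖H (Ψ (i * h) u) - Y i ω‖ + ‖H (Ψ (i * h) (U ω)) - Y i ω‖ := by
      have : H (Ψ (i * h) u) - H (Ψ (i * h) (U ω)) =
          (H (Ψ (i * h) u) - Y i ω) - (H (Ψ (i * h) (U ω)) - Y i ω) := by abel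
      rw [this]; exact norm_sub_le _ _
    have h1 : ‖H (Ψ (i * h) u) - Y i ω‖ ≤ M :=
      Finset.le_sup' (f := fun j : ℕ => ‖H (Ψ (j * h) u) - Y j ω‖)
        (Finset.mem_range.mpr (Nat.lt_succ_of_le hik))
    have h2 : ‖H (Ψ (i * h) (U ω)) - Y i ω‖ ≤ M := hω i hik
    have hcb : c * ‖U ω - u‖ ≤ 2 * ‖Z j0 ω‖ := by
      calc c * ‖U ω - u‖ ≤ ‖H (Ψ (i * h) u) - H (Ψ (i * h) (U ω))‖ := hi
        _ ≤ M + M := le_trans htri (add_le_add h1 h2)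
        _ = 2 * ‖Z j0 ω‖ := by rw [hM]; ring
    have hsq : c ^ 2 * ‖U ω - u‖ ^ 2 ≤ 4 * ‖Z j0 ω‖ ^ 2 := by
      have hsq0 := mul_self_le_mul_self (mul_nonneg hc.le (norm_nonneg (U ω - u))) hcb
      nlinarith [hsq0]
    have hsum : ‖Z j0 ω‖ ^ 2 ≤ ∑ j ∈ Finset.range (k + 1), ‖Z j ω‖ ^ 2 :=
      Finset.single_le_sum (f := fun j : ℕ => ‖Z j ω‖ ^ 2) (fun i _ => by positivity) hj0mem
    rw [div_mul_eq_mul_div, le_div_iff₀ (by positivity : (0:ℝ) < c ^ 2)]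
    nlinarith
  have hC1 : (0:ℝ) ≤ 4 / c ^ 2 := by positivity
  have htk : (0:ℝ) ≤ (k : ℝ) * h := mul_nonneg (Nat.cast_nonneg k) hh.le
  have hexp : (0:ℝ) ≤ Real.exp (2 * (‖A‖ + 2 * ‖B‖ * R) * ((k:ℝ) * h)) :=
    (Real.exp_pos _).le
  constructor
  · calc ∫⁻ ω, ENNReal.ofReal (‖U ω - u‖ ^ 2) ∂μ
        ≤ ENNReal.ofReal (4 / c ^ 2 * (k + 1) * σZ ^ 2) :=
          lintegral_sq_le_of_ae_le_sum μ Z hZmeas σZ k hZmom _ _ hC1 key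
      _ = ENNReal.ofReal (4 * (k + 1) / c ^ 2 * σZ ^ 2) := by congr 1; ring
  · have key2 : ∀ᵐ ω ∂μ, ‖Ψ ((k:ℝ) * h) (U ω) - Ψ ((k:ℝ) * h) u‖ ^ 2 ≤
        (4 / c ^ 2 * Real.exp (2 * (‖A‖ + 2 * ‖B‖ * R) * ((k:ℝ) * h))) *
          ∑ j ∈ Finset.range (k + 1), ‖Z j ω‖ ^ 2 := by
      filter_upwards [key] with ω hω
      have hG := flow_exp_bound A B f R Ψ hΨ0 hΨR hΨode (U ω) u (hUR ω) hu
        ((k:ℝ) * h) htk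
      have hGsq : ‖Ψ ((k:ℝ) * h) (U ω) - Ψ ((k:ℝ) * h) u‖ ^ 2 ≤
          Real.exp (2 * (‖A‖ + 2 * ‖B‖ * R) * ((k:ℝ) * h)) * ‖U ω - u‖ ^ 2 := by
        have he : Real.exp ((‖A‖ + 2 * ‖B‖ * R) * ((k:ℝ) * h)) ^ 2 =
            Real.exp (2 * (‖A‖ + 2 * ‖B‖ * R) * ((k:ℝ) * h)) := by
          rw [sq, ← Real.exp_add]; congr 1; ring
        nlinarith [norm_nonneg (Ψ ((k:ℝ) * h) (U ω) - Ψ ((k:ℝ) * h) u),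
          norm_nonneg (U ω - u), (Real.exp_pos ((‖A‖ + 2 * ‖B‖ * R) * ((k:ℝ) * h))).le]
      calc ‖Ψ ((k:ℝ) * h) (U ω) - Ψ ((k:ℝ) * h) u‖ ^ 2
          ≤ Real.exp (2 * (‖A‖ + 2 * ‖B‖ * R) * ((k:ℝ) * h)) * ‖U ω - u‖ ^ 2 := hGsq
        _ ≤ Real.exp (2 * (‖A‖ + 2 * ‖B‖ * R) * ((k:ℝ) * h)) *
            (4 / c ^ 2 * ∑ j ∈ Finset.range (k + 1), ‖Z j ω‖ ^ 2) := by
            exact mul_le_mul_of_nonneg_left hω hexp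
        _ = (4 / c ^ 2 * Real.exp (2 * (‖A‖ + 2 * ‖B‖ * R) * ((k:ℝ) * h))) *
            ∑ j ∈ Finset.range (k + 1), ‖Z j ω‖ ^ 2 := by ring
    calc ∫⁻ ω, ENNReal.ofReal (‖Ψ ((k:ℝ) * h) (U ω) - Ψ ((k:ℝ) * h) u‖ ^ 2) ∂μ
        ≤ ENNReal.ofReal ((4 / c ^ 2 *
            Real.exp (2 * (‖A‖ + 2 * ‖B‖ * R) * ((k:ℝ) * h))) * (k + 1) * σZ ^ 2) :=
          lintegral_sq_le_of_ae_le_sum μ Z hZmeas σZ k hZmom _ _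
            (mul_nonneg hC1 hexp) key2
      _ = ENNReal.ofReal (4 * (k + 1) / c ^ 2 *
            Real.exp (2 * (‖A‖ + 2 * ‖B‖ * R) * ((k:ℝ) * h)) * σZ ^ 2) := by
          congr 1; ring
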